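/- For all g, h ∈ SL₂(ℝ) and z ∈ ℍ, ω(g,h) = (1/4)[sign(c(-d)(g)) + sign(c(-d)(h)) − sign(c(-d)(gh)) − sign(c(-d)(g)·c(-d)(h)·c(-d)(gh))], where ω(g,h) = (1/(2πi))(Log j(g,h·z) + Log j(h,z) − Log j(gh,z)). -/

import Mathlib

open Complex

/-- The automorphy factor `j(g,z) = cz + d` for `g = (a b; c d) ∈ SL₂(ℝ)`. -/
noncomputable def jf (g : Matrix.SpecialLinearGroup (Fin 2) ℝ) (z : ℂ) : ℂ :=
  (g.1 1 0 : ℝ) * z + (g.1 1 1 : ℝ)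

/-- The Möbius action `g·z = (az+b)/(cz+d)`. -/
noncomputable def act (g : Matrix.SpecialLinearGroup (Fin 2) ℝ) (z : ℂ) : ℂ :=
  ((g.1 0 0 : ℝ) * z + (g.1 0 1 : ℝ)) / jf g z

/-- `ω(g,h) = (1/(2πi))(Log j(g,h·z) + Log j(h,z) − Log j(gh,z))`. -/
noncomputable def om (g h : Matrix.SpecialLinearGroup (Fin 2) ℝ) (z : ℂ) : ℂ :=
  (1 / (2 * Real.pi * I)) *
    (Complex.log (jf g (act h z)) + Complex.log (jf h z) - Complex.log (jf (g * h) z))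

/-- `c(-d)(g) = c` if `c ≠ 0`, and `-d` if `c = 0`. -/
noncomputable def cd (g : Matrix.SpecialLinearGroup (Fin 2) ℝ) : ℝ :=
  if g.1 1 0 ≠ 0 then g.1 1 0 else -(g.1 1 1)

lemma det2 (g : Matrix.SpecialLinearGroup (Fin 2) ℝ) :
    g.1 0 0 * g.1 1 1 - g.1 0 1 * g.1 1 0 = 1 := by
  have := g.2; rwa [Matrix.det_fin_two] at this

lemma jf_im (g : Matrix.SpecialLinearGroup (Fin 2) ℝ) (z : ℂ) :
    (jf g z).im = g.1 1 0 * z.im := by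
  simp [jf]

lemma jf_ne (g : Matrix.SpecialLinearGroup (Fin 2) ℝ) (z : ℂ) (hz : 0 < z.im) :
    jf g z ≠ 0 := by
  by_cases hc : g.1 1 0 = 0
  · have hd : g.1 1 1 ≠ 0 := by
      intro h0; have := det2 g; rw [hc, h0] at this; simp at this
    rw [jf, hc]
    simpa using hd
  · intro h0
    have := jf_im g z
    rw [h0] at this
    simp at this
    rcases this with h | h
    · exact hc h
    · exact absurd h (by linarith)

lemma act_im_pos (h : Matrix.SpecialLinearGroup (Fin 2) ℝ) (z : ℂ) (hz : 0 < z.im) :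
    0 < (act h z).im := by
  have hq := jf_ne h z hz
  have hn : 0 < Complex.normSq (jf h z) := Complex.normSq_pos.2 hq
  have key : (act h z).im = z.im / Complex.normSq (jf h z) := by
    rw [act, Complex.div_im, div_sub_div_same]
    congr 1
    simp only [jf, add_re, add_im, mul_re, mul_im, ofReal_re, ofReal_im, zero_mul,
      mul_zero, sub_zero, zero_add, add_zero]
    linear_combination z.im * det2 h
  rw [key]; positivity

lemma jf_cocycle (g h : Matrix.SpecialLinearGroup (Fin 2) ℝ) (z : ℂ) (hz : 0 < z.im) :
    jf (g * h) z = jf g (act h z) * jf h z := by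
  have hq : ((h.1 1 0 : ℝ) : ℂ) * z + ((h.1 1 1 : ℝ) : ℂ) ≠ 0 := jf_ne h z hz
  rw [jf, act, jf, jf]
  have hmul : (g * h).1 = g.1 * h.1 := rfl
  rw [hmul]
  simp only [Matrix.mul_apply, Fin.sum_univ_two]
  push_cast
  field_simp
  ring

lemma log_sub (w₁ w₂ : ℂ) (h1 : w₁ ≠ 0) (h2 : w₂ ≠ 0) :
    Complex.log w₁ + Complex.log w₂ - Complex.log (w₁ * w₂)
      = ((w₁.arg + w₂.arg - (w₁ * w₂).arg : ℝ)) * I := by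
  apply Complex.ext
  · simp [Complex.log_re, map_mul,
      Real.log_mul (norm_ne_zero_iff.mpr h1) (norm_ne_zero_iff.mpr h2)]
  · simp [Complex.log_im]

lemma cd_arg (g : Matrix.SpecialLinearGroup (Fin 2) ℝ) (z : ℂ) (hz : 0 < z.im) :
    (0 < cd g ∧ 0 < (jf g z).arg ∧ (jf g z).arg ≤ Real.pi) ∨
    (cd g < 0 ∧ -Real.pi < (jf g z).arg ∧ (jf g z).arg ≤ 0) := by
  rcases lt_trichotomy (g.1 1 0) 0 with hc | hc | hc
  · right
    have him : (jf g z).im < 0 := by rw [jf_im]; exact mul_neg_of_neg_of_pos hc hz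
    refine ⟨?_, Complex.neg_pi_lt_arg _, (Complex.arg_neg_iff.2 him).le⟩
    rw [cd, if_pos hc.ne]; exact hc
  · have hd : g.1 1 1 ≠ 0 := by
      intro h0; have := det2 g; rw [hc, h0] at this; simp at this
    have hjf : jf g z = ((g.1 1 1 : ℝ) : ℂ) := by rw [jf, hc]; push_cast; ring
    have hcd : cd g = -(g.1 1 1) := by rw [cd, if_neg (by simpa using hc)]
    rcases lt_or_gt_of_ne hd with hd' | hd'
    · left
      have ha : (jf g z).arg = Real.pi := by
        rw [hjf]; exact Complex.arg_ofReal_of_neg hd'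
      rw [hcd, ha]
      exact ⟨by linarith, Real.pi_pos, le_refl _⟩
    · right
      have ha : (jf g z).arg = 0 := by
        rw [hjf]; exact Complex.arg_ofReal_of_nonneg hd'.le
      rw [hcd, ha]
      exact ⟨by linarith, by linarith [Real.pi_pos], le_refl _⟩
  · left
    have him : 0 < (jf g z).im := by rw [jf_im]; exact mul_pos hc hz
    have h0 : (jf g z).arg ≠ 0 := by
      intro h; rw [Complex.arg_eq_zero_iff] at h; linarith [h.2]
    refine ⟨?_, lt_of_le_of_ne (Complex.arg_nonneg_iff.2 him.le) (Ne.symm h0),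
      Complex.arg_le_pi _⟩
    rw [cd, if_pos hc.ne']; exact hc

lemma arg_sub_arg (w₁ w₂ : ℂ) (h1 : w₁ ≠ 0) (h2 : w₂ ≠ 0) :
    ∃ k : ℤ, w₁.arg + w₂.arg - (w₁ * w₂).arg = 2 * Real.pi * k := by
  have h := Complex.arg_mul_coe_angle h1 h2
  have h' : ((w₁.arg + w₂.arg : ℝ) : Real.Angle) = ((w₁ * w₂).arg : ℝ) := by
    rw [Real.Angle.coe_add, ← h]
  exact Real.Angle.angle_eq_iff_two_pi_dvd_sub.1 h'

lemma pin_int (k m : ℤ) (h1 : ((m : ℝ)) - 1 < k) (h2 : (k : ℝ) < m + 1) : k = m := by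
  have a : (m : ℤ) - 1 < k := by exact_mod_cast h1
  have b : k < m + 1 := by exact_mod_cast h2
  omega

theorem om_formula (g h : Matrix.SpecialLinearGroup (Fin 2) ℝ) (z : ℂ) (hz : 0 < z.im) :
    om g h z = (((1/4 : ℝ) * (Real.sign (cd g) + Real.sign (cd h) - Real.sign (cd (g * h))
      - Real.sign (cd g * cd h * cd (g * h)))) : ℝ) := by
  have hπ := Real.pi_pos
  have hz' : 0 < (act h z).im := act_im_pos h z hz
  have h1 : jf g (act h z) ≠ 0 := jf_ne g _ hz'
  have h2 : jf h z ≠ 0 := jf_ne h z hz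
  have hco : jf (g * h) z = jf g (act h z) * jf h z := jf_cocycle g h z hz
  set w₁ := jf g (act h z) with hw₁
  set w₂ := jf h z with hw₂
  obtain ⟨k, hk⟩ := arg_sub_arg w₁ w₂ h1 h2
  have key : om g h z = (((w₁.arg + w₂.arg - (w₁ * w₂).arg) / (2 * Real.pi) : ℝ) : ℂ) := by
    rw [om, hco, log_sub w₁ w₂ h1 h2]
    rw [mul_comm (1 / (2 * (Real.pi : ℂ) * I)), mul_one_div, mul_div_mul_right _ _ I_ne_zero]
    push_cast
    ring
  rw [key, Complex.ofReal_inj]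
  have Hg := cd_arg g (act h z) hz'
  have Hh := cd_arg h z hz
  have Hgh := cd_arg (g * h) z hz
  rw [hco] at Hgh
  rcases Hg with ⟨hs1, hA1, hB1⟩ | ⟨hs1, hA1, hB1⟩ <;>
    rcases Hh with ⟨hs2, hA2, hB2⟩ | ⟨hs2, hA2, hB2⟩ <;>
    rcases Hgh with ⟨hs3, hA3, hB3⟩ | ⟨hs3, hA3, hB3⟩
  · -- + + +  : k = 0
    rw [Real.sign_of_pos hs1, Real.sign_of_pos hs2, Real.sign_of_pos hs3,
      Real.sign_of_pos (mul_pos (mul_pos hs1 hs2) hs3)]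
    have hk0 : k = 0 := pin_int k 0 (by push_cast; nlinarith) (by push_cast; nlinarith)
    rw [hk0] at hk
    push_cast at hk
    rw [hk]; norm_num
  · -- + + -  : k = 1
    rw [Real.sign_of_pos hs1, Real.sign_of_pos hs2, Real.sign_of_neg hs3,
      Real.sign_of_neg (mul_neg_of_pos_of_neg (mul_pos hs1 hs2) hs3)]
    have hk0 : k = 1 := pin_int k 1 (by push_cast; nlinarith) (by push_cast; nlinarith)
    rw [hk0] at hk
    push_cast at hk
    rw [hk]
    field_simp
    norm_num
  · -- + - +  : k = 0
    rw [Real.sign_of_pos hs1, Real.sign_of_neg hs2, Real.sign_of_pos hs3,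
      Real.sign_of_neg (mul_neg_of_neg_of_pos (mul_neg_of_pos_of_neg hs1 hs2) hs3)]
    have hk0 : k = 0 := pin_int k 0 (by push_cast; nlinarith) (by push_cast; nlinarith)
    rw [hk0] at hk
    push_cast at hk
    rw [hk]; norm_num
  · -- + - -  : k = 0
    rw [Real.sign_of_pos hs1, Real.sign_of_neg hs2, Real.sign_of_neg hs3,
      Real.sign_of_pos (mul_pos_of_neg_of_neg (mul_neg_of_pos_of_neg hs1 hs2) hs3)]
    have hk0 : k = 0 := pin_int k 0 (by push_cast; nlinarith) (by push_cast; nlinarith)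
    rw [hk0] at hk
    push_cast at hk
    rw [hk]; norm_num
  · -- - + +  : k = 0
    rw [Real.sign_of_neg hs1, Real.sign_of_pos hs2, Real.sign_of_pos hs3,
      Real.sign_of_neg (mul_neg_of_neg_of_pos (mul_neg_of_neg_of_pos hs1 hs2) hs3)]
    have hk0 : k = 0 := pin_int k 0 (by push_cast; nlinarith) (by push_cast; nlinarith)
    rw [hk0] at hk
    push_cast at hk
    rw [hk]; norm_num
  · -- - + -  : k = 0
    rw [Real.sign_of_neg hs1, Real.sign_of_pos hs2, Real.sign_of_neg hs3,
      Real.sign_of_pos (mul_pos_of_neg_of_neg (mul_neg_of_neg_of_pos hs1 hs2) hs3)]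
    have hk0 : k = 0 := pin_int k 0 (by push_cast; nlinarith) (by push_cast; nlinarith)
    rw [hk0] at hk
    push_cast at hk
    rw [hk]; norm_num
  · -- - - +  : k = -1
    rw [Real.sign_of_neg hs1, Real.sign_of_neg hs2, Real.sign_of_pos hs3,
      Real.sign_of_pos (mul_pos (mul_pos_of_neg_of_neg hs1 hs2) hs3)]
    have hk0 : k = -1 := pin_int k (-1) (by push_cast; nlinarith) (by push_cast; nlinarith)
    rw [hk0] at hk
    push_cast at hk
    rw [hk]
    field_simp
    norm_num
  · -- - - -  : k = 0
    rw [Real.sign_of_neg hs1, Real.sign_of_neg hs2, Real.sign_of_neg hs3,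
      Real.sign_of_neg (mul_neg_of_pos_of_neg (mul_pos_of_neg_of_neg hs1 hs2) hs3)]
    have hk0 : k = 0 := pin_int k 0 (by push_cast; nlinarith) (by push_cast; nlinarith)
    rw [hk0] at hk
    push_cast at hk
    rw [hk]; norm_num
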